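/- Let f be the path-dependent game f(A) = R · ∏_{j ∈ A ∩ M} q_j on subsets A of F. For any S ⊆ F with S ⊆ M, the Shapley interaction index satisfies SII(S) = R · (∏_{j ∈ S} (q_j - 1)) · ∫_0^1 ∏_{j ∈ M \ S} ((1-p) + p · q_j) dp. -/

import Mathlib

/-- Beta integral with natural exponents. -/
lemma beta_nat_integral : ∀ (k m : ℕ),
    ∫ x in (0:ℝ)..1, x ^ m * (1 - x) ^ k
      = (m.factorial * k.factorial : ℝ) / ((m + k + 1).factorial : ℝ) := by
  intro k
  induction k with
  | zero =>
    intro m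
    simp only [pow_zero, mul_one, integral_pow, Nat.factorial_zero]
    rw [Nat.factorial_succ]
    have : ((m + 1 : ℕ) : ℝ) ≠ 0 := by positivity
    push_cast
    field_simp
    simp
  | succ k ih =>
    intro m
    have hcong : ∀ x : ℝ, x ^ m * (1 - x) ^ (k + 1)
        = x ^ m * (1 - x) ^ k - x ^ (m + 1) * (1 - x) ^ k := by
      intro x; ring
    have h1 : IntervalIntegrable (fun x : ℝ => x ^ m * (1 - x) ^ k)
        MeasureTheory.volume 0 1 := by
      apply Continuous.intervalIntegrable; continuity
    have h2 : IntervalIntegrable (fun x : ℝ => x ^ (m + 1) * (1 - x) ^ k)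
        MeasureTheory.volume 0 1 := by
      apply Continuous.intervalIntegrable; continuity
    calc ∫ x in (0:ℝ)..1, x ^ m * (1 - x) ^ (k + 1)
        = ∫ x in (0:ℝ)..1, (x ^ m * (1 - x) ^ k - x ^ (m + 1) * (1 - x) ^ k) := by
          apply intervalIntegral.integral_congr; intro x _; exact hcong x
      _ = (∫ x in (0:ℝ)..1, x ^ m * (1 - x) ^ k)
            - ∫ x in (0:ℝ)..1, x ^ (m + 1) * (1 - x) ^ k :=
          intervalIntegral.integral_sub h1 h2
      _ = (m.factorial * k.factorial : ℝ) / ((m + k + 1).factorial : ℝ)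
            - ((m + 1).factorial * k.factorial : ℝ) / (((m + 1) + k + 1).factorial : ℝ) := by
          rw [ih m, ih (m + 1)]
      _ = (m.factorial * (k + 1).factorial : ℝ) / ((m + (k + 1) + 1).factorial : ℝ) := by
          have e1 : (m + 1) + k + 1 = (m + k + 1) + 1 := by ring
          have e2 : m + (k + 1) + 1 = (m + k + 1) + 1 := by ring
          rw [e1, e2, Nat.factorial_succ ((m + k + 1)), Nat.factorial_succ k,
            Nat.factorial_succ m]
          have hp1 : ((m + k + 1).factorial : ℝ) ≠ 0 := by
            exact_mod_cast (Nat.factorial_pos _).ne'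
          have hp2 : ((m + k + 1 + 1 : ℕ) : ℝ) ≠ 0 := by positivity
          push_cast
          field_simp
          ring

/-- Shapley interaction values of the path-dependent game, case `S ⊆ M`:
`SII(S) = R · ∏_{j ∈ S} (q_j - 1) · ∫_0^1 ∏_{j ∈ M \ S} ((1-p) + p q_j) dp`. -/
theorem sii_path_dependent_of_subset {F : Type*} [Fintype F] [DecidableEq F]
    (M : Finset F) (R : ℝ) (q : F → ℝ)
    (f : Finset F → ℝ) (hf : ∀ A : Finset F, f A = R * ∏ j ∈ A ∩ M, q j)
    (S : Finset F) (hSM : S ⊆ M) :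
    ∑ T ∈ Sᶜ.powerset,
        ((T.card.factorial * (Fintype.card F - S.card - T.card).factorial : ℝ) /
          ((Fintype.card F - S.card + 1).factorial : ℝ)) *
        (∑ L ∈ S.powerset, (-1 : ℝ) ^ (S.card - L.card) * f (T ∪ L))
      = R * (∏ j ∈ S, (q j - 1)) *
          ∫ p in (0:ℝ)..1, ∏ j ∈ M \ S, ((1 - p) + p * q j) := by
  classical
  set c : F → ℝ := fun j => if j ∈ M then q j else 1 with hc
  -- Step 1: the inner sum over L equals R * ∏_{T∩M} q * ∏_S (q-1)
  have hinner : ∀ T ∈ Sᶜ.powerset,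
      (∑ L ∈ S.powerset, (-1 : ℝ) ^ (S.card - L.card) * f (T ∪ L))
        = R * (∏ j ∈ T ∩ M, q j) * ∏ j ∈ S, (q j - 1) := by
    intro T hT
    rw [Finset.mem_powerset] at hT
    have hdisjTS : Disjoint T S := Finset.disjoint_left.mpr fun a ha =>
      by simpa using hT ha
    have hexp : (∏ j ∈ S, (q j - 1))
        = ∑ L ∈ S.powerset, (∏ j ∈ L, q j) * (-1 : ℝ) ^ (S.card - L.card) := by
      have := Finset.prod_add q (fun _ => (-1 : ℝ)) S
      simp only [Finset.prod_const] at this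
      calc (∏ j ∈ S, (q j - 1)) = ∏ j ∈ S, (q j + (-1)) := by
            apply Finset.prod_congr rfl; intros; ring
        _ = ∑ L ∈ S.powerset, (∏ j ∈ L, q j) * (-1 : ℝ) ^ (S \ L).card := this
        _ = ∑ L ∈ S.powerset, (∏ j ∈ L, q j) * (-1 : ℝ) ^ (S.card - L.card) := by
            apply Finset.sum_congr rfl
            intro L hL
            rw [Finset.card_sdiff_of_subset (Finset.mem_powerset.mp hL)]
    rw [hexp, Finset.mul_sum]
    apply Finset.sum_congr rfl
    intro L hL
    rw [Finset.mem_powerset] at hL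
    have hLM : L ∩ M = L := Finset.inter_eq_left.mpr (hL.trans hSM)
    have hdisj : Disjoint (T ∩ M) L := Finset.disjoint_left.mpr fun a ha =>
      by
        have := (Finset.mem_inter.mp ha).1
        exact fun haL => (Finset.disjoint_left.mp hdisjTS this) (hL haL)
    rw [hf, Finset.union_inter_distrib_right, hLM, Finset.prod_union hdisj]
    ring
  -- Step 2: the integrand equals a sum over subsets of Sᶜ
  have hprod : ∀ p : ℝ, (∏ j ∈ M \ S, ((1 - p) + p * q j))
      = ∑ T ∈ Sᶜ.powerset,
          (∏ j ∈ T ∩ M, q j) * (p ^ T.card * (1 - p) ^ (Sᶜ.card - T.card)) := by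
    intro p
    have hMS : M \ S ⊆ Sᶜ := fun a ha => by
      simp only [Finset.mem_compl]
      exact (Finset.mem_sdiff.mp ha).2
    have step1 : (∏ j ∈ M \ S, ((1 - p) + p * q j))
        = ∏ j ∈ Sᶜ, (p * c j + (1 - p)) := by
      have e1 : (∏ j ∈ M \ S, ((1 - p) + p * q j))
          = ∏ j ∈ M \ S, (p * c j + (1 - p)) := by
        apply Finset.prod_congr rfl
        intro j hj
        have hjM : j ∈ M := (Finset.mem_sdiff.mp hj).1
        rw [hc]
        simp only [if_pos hjM]
        ring
      rw [e1]
      apply Finset.prod_subset hMS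
      intro j hj hj'
      have hjM : j ∉ M := by
        intro hjM
        exact hj' (Finset.mem_sdiff.mpr ⟨hjM, Finset.mem_compl.mp hj⟩)
      rw [hc]
      simp only [if_neg hjM]
      ring
    rw [step1, Finset.prod_add]
    apply Finset.sum_congr rfl
    intro T hT
    rw [Finset.mem_powerset] at hT
    rw [Finset.prod_const, Finset.card_sdiff_of_subset hT, Finset.prod_mul_distrib,
      Finset.prod_const]
    have : (∏ j ∈ T, c j) = ∏ j ∈ T ∩ M, q j := by
      rw [← Finset.filter_mem_eq_inter, Finset.prod_filter]
    rw [this]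
    ring
  -- Step 3: compute the integral
  have hcard : Sᶜ.card = Fintype.card F - S.card := Finset.card_compl S
  have hint : (∫ p in (0:ℝ)..1, ∏ j ∈ M \ S, ((1 - p) + p * q j))
      = ∑ T ∈ Sᶜ.powerset,
          (∏ j ∈ T ∩ M, q j) *
            ((T.card.factorial * (Sᶜ.card - T.card).factorial : ℝ) /
              ((Sᶜ.card + 1).factorial : ℝ)) := by
    rw [intervalIntegral.integral_congr (g := fun p => ∑ T ∈ Sᶜ.powerset,
        (∏ j ∈ T ∩ M, q j) * (p ^ T.card * (1 - p) ^ (Sᶜ.card - T.card)))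
        (fun p _ => hprod p)]
    rw [intervalIntegral.integral_finset_sum]
    · apply Finset.sum_congr rfl
      intro T hT
      rw [Finset.mem_powerset] at hT
      rw [intervalIntegral.integral_const_mul, beta_nat_integral,
        show T.card + (Sᶜ.card - T.card) + 1 = Sᶜ.card + 1 by
          have := Finset.card_le_card hT; omega]
    · intro T _
      apply Continuous.intervalIntegrable
      continuity
  -- Step 4: combine
  rw [hint, Finset.mul_sum]
  apply Finset.sum_congr rfl
  intro T hT
  rw [hinner T hT, hcard]
  ring
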